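/- Every diversity game in which all agents have identical preferences over the red ratios in Θ \ {0, 1} satisfies the top coalition property: for every nonempty set S of agents, there exists a nonempty T ⊆ S such that every agent in T weakly prefers T to every other coalition T' ⊆ S containing that agent. -/
import Mathlib


open Finset

/-- The red ratio of a finite coalition. -/
def redRatio {α : Type*} (red : α → Prop) [DecidablePred red] (S : Finset α) : ℚ :=
  ((S.filter red).card : ℚ) / (S.card : ℚ)

/-- The set `Θ` of possible red ratios `r/s`, `0 ≤ r ≤ |R|`, `1 ≤ s ≤ |R|+|B|`. -/
def ratioSet {α : Type*} [Fintype α] (red : α → Prop) [DecidablePred red] : Finset ℚ :=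
  (Finset.Icc 1 (Fintype.card α)).biUnion fun s =>
    (Finset.range ((univ.filter red).card + 1)).image fun r : ℕ => (r : ℚ) / (s : ℚ)

/-- Every diversity game in which all agents have identical (strict
linear) preferences over the red ratios in `Θ \ {0, 1}` satisfies the top coalition
property: for every nonempty set `S` of agents there is a nonempty `T ⊆ S` such
that every agent of `T` weakly prefers `T` to every coalition `T' ⊆ S` containing
her. -/
lemma exists_top {β : Type*} [DecidableEq β] (r : β → β → Prop) (ht : Transitive r)
    (hi : ∀ x, ¬ r x x) (s : Finset β) (hs : s.Nonempty) :
    ∃ m ∈ s, ∀ x ∈ s, ¬ r x m := by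
  classical
  induction s using Finset.induction_on with
  | empty => exact absurd hs (by simp)
  | @insert a s ha ih =>
    rcases s.eq_empty_or_nonempty with rfl | hs'
    · exact ⟨a, by simp, by simpa using hi a⟩
    · obtain ⟨m, hm, hmax⟩ := ih hs'
      by_cases hr : r a m
      · refine ⟨a, mem_insert_self _ _, ?_⟩
        intro x hx hxa
        rcases mem_insert.1 hx with rfl | hx
        · exact hi x hxa
        · exact hmax x hx (ht hxa hr)
      · refine ⟨m, mem_insert_of_mem hm, ?_⟩
        intro x hx hxm
        rcases mem_insert.1 hx with rfl | hx
        · exact hr hxm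
        · exact hmax x hx hxm


lemma ratio_mem {α : Type*} [Fintype α] [DecidableEq α] (red : α → Prop) [DecidablePred red] (S : Finset α) (hS : S.Nonempty) : redRatio red S ∈ ratioSet red := by
  rw [ratioSet, mem_biUnion]
  refine ⟨S.card, ?_, ?_⟩
  · rw [Finset.mem_Icc]
    exact ⟨Finset.card_pos.2 hS, Finset.card_le_card (subset_univ S)⟩
  · rw [mem_image]
    exact ⟨(S.filter red).card, by
      rw [Finset.mem_range, Nat.lt_succ_iff]
      exact Finset.card_le_card (filter_subset_filter red (subset_univ S)), rfl⟩

lemma ratio_pure_red {α : Type*} [Fintype α] [DecidableEq α] (red : α → Prop) [DecidablePred red] (S : Finset α) (hS : S.Nonempty) (h : ∀ x ∈ S, red x) :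
    redRatio red S = 1 := by
  have : S.filter red = S := filter_eq_self.2 h
  rw [redRatio, this, div_self]
  exact_mod_cast Finset.card_pos.2 hS |>.ne'

lemma ratio_pure_blue {α : Type*} [Fintype α] [DecidableEq α] (red : α → Prop) [DecidablePred red] (S : Finset α) (h : ∀ x ∈ S, ¬ red x) :
    redRatio red S = 0 := by
  have : S.filter red = ∅ := filter_eq_empty_iff.2 h
  rw [redRatio, this]
  simp

lemma ratio_mixed_pos {α : Type*} [Fintype α] [DecidableEq α] (red : α → Prop) [DecidablePred red] (S : Finset α) (h : ∃ x ∈ S, red x) : 0 < redRatio red S := by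
  obtain ⟨x, hx, hrx⟩ := h
  have h1 : 0 < (S.filter red).card := Finset.card_pos.2 ⟨x, mem_filter.2 ⟨hx, hrx⟩⟩
  have h2 : 0 < S.card := Finset.card_pos.2 ⟨x, hx⟩
  exact div_pos (by exact_mod_cast h1) (by exact_mod_cast h2)

lemma ratio_mixed_lt_one {α : Type*} [Fintype α] [DecidableEq α] (red : α → Prop) [DecidablePred red] (S : Finset α) (h : ∃ x ∈ S, ¬ red x) : redRatio red S < 1 := by
  obtain ⟨x, hx, hrx⟩ := h
  have hsub : S.filter red ⊂ S := by
    refine ⟨filter_subset _ _, fun hss => hrx (mem_filter.1 (hss hx)).2⟩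
  have h1 : (S.filter red).card < S.card := Finset.card_lt_card hsub
  have h2 : (0:ℚ) < S.card := by exact_mod_cast Finset.card_pos.2 ⟨x, hx⟩
  rw [redRatio, div_lt_one h2]
  exact_mod_cast h1
theorem stmt2 {α : Type*} [Fintype α] [DecidableEq α] (red : α → Prop) [DecidablePred red]
    (pref : α → ℚ → ℚ → Prop)
    (hirr : ∀ i (θ : ℚ), ¬ pref i θ θ)
    (htrans : ∀ i, Transitive (pref i))
    (htotal : ∀ i, ∀ θ ∈ ratioSet red, ∀ θ' ∈ ratioSet red,
      θ ≠ θ' → pref i θ θ' ∨ pref i θ' θ)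
    (hsame : ∀ i j : α, ∀ θ ∈ ratioSet red, ∀ θ' ∈ ratioSet red,
      θ ≠ 0 → θ ≠ 1 → θ' ≠ 0 → θ' ≠ 1 → (pref i θ θ' ↔ pref j θ θ')) :
    ∀ S : Finset α, S.Nonempty → ∃ T ⊆ S, T.Nonempty ∧
      ∀ i ∈ T, ∀ T' ⊆ S, i ∈ T' →
        redRatio red T = redRatio red T' ∨ pref i (redRatio red T) (redRatio red T') := by
  classical
  intro S hS
  by_cases hred : ∀ x ∈ S, red x
  · refine ⟨S, Finset.Subset.refl S, hS, fun i hi T' hT' hiT' => Or.inl ?_⟩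
    rw [ratio_pure_red red S hS hred,
      ratio_pure_red red T' ⟨i, hiT'⟩ (fun x hx => hred x (hT' hx))]
  by_cases hblue : ∀ x ∈ S, ¬ red x
  · refine ⟨S, Finset.Subset.refl S, hS, fun i hi T' hT' hiT' => Or.inl ?_⟩
    rw [ratio_pure_blue red S hblue,
      ratio_pure_blue red T' (fun x hx => hblue x (hT' hx))]
  push_neg at hred hblue
  obtain ⟨b, hbS, hbred⟩ := hred
  obtain ⟨a, haS, hared⟩ := hblue
  -- the set of ratios of mixed subcoalitions of S
  set M : Finset ℚ := (S.powerset.filter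
    (fun T => (∃ x ∈ T, red x) ∧ (∃ x ∈ T, ¬ red x))).image (redRatio red) with hM
  have hSM : redRatio red S ∈ M := by
    rw [hM, mem_image]
    exact ⟨S, mem_filter.2 ⟨mem_powerset.2 (Finset.Subset.refl S), ⟨a, haS, hared⟩,
      ⟨b, hbS, hbred⟩⟩, rfl⟩
  -- facts about members of M
  have hMfact : ∀ θ ∈ M, θ ∈ ratioSet red ∧ θ ≠ 0 ∧ θ ≠ 1 := by
    intro θ hθ
    rw [hM, mem_image] at hθ
    obtain ⟨T, hT, rfl⟩ := hθ
    rw [mem_filter, mem_powerset] at hT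
    obtain ⟨hTS, ⟨x, hx, hxr⟩, ⟨y, hy, hyr⟩⟩ := hT
    exact ⟨ratio_mem red T ⟨x, hx⟩, (ratio_mixed_pos red T ⟨x, hx, hxr⟩).ne',
      (ratio_mixed_lt_one red T ⟨y, hy, hyr⟩).ne⟩
  have h0 : (0:ℚ) ∈ ratioSet red := by
    have := ratio_pure_blue red {b} (by simpa using hbred)
    simpa [this] using ratio_mem red {b} (singleton_nonempty b)
  have h1 : (1:ℚ) ∈ ratioSet red := by
    have := ratio_pure_red red {a} (singleton_nonempty a) (by simpa using hared)
    simpa [this] using ratio_mem red {a} (singleton_nonempty a)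
  -- pick the best mixed ratio w.r.t. the common preference (via agent a)
  obtain ⟨θs, hθsM, hθsmax⟩ := exists_top (pref a) (htrans a) (hirr a) M ⟨_, hSM⟩
  obtain ⟨hθsΘ, hθs0, hθs1⟩ := hMfact θs hθsM
  have hbest : ∀ i : α, ∀ θ ∈ M, θ ≠ θs → pref i θs θ := by
    intro i θ hθ hne
    obtain ⟨hθΘ, hθ0, hθ1⟩ := hMfact θ hθ
    have : pref a θs θ := by
      rcases htotal a θs hθsΘ θ hθΘ (Ne.symm hne) with h | h
      · exact h
      · exact absurd h (hθsmax θ hθ)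
    exact (hsame a i θs hθsΘ θ hθΘ hθs0 hθs1 hθ0 hθ1).1 this
  -- classification of ratio of any nonempty subcoalition
  have hclass : ∀ T' ⊆ S, T'.Nonempty →
      redRatio red T' ∈ M ∨ (redRatio red T' = 1 ∧ ∀ x ∈ T', red x) ∨
        (redRatio red T' = 0 ∧ ∀ x ∈ T', ¬ red x) := by
    intro T' hT' hT'ne
    by_cases hr : ∀ x ∈ T', red x
    · exact Or.inr (Or.inl ⟨ratio_pure_red red T' hT'ne hr, hr⟩)
    by_cases hbl : ∀ x ∈ T', ¬ red x
    · exact Or.inr (Or.inr ⟨ratio_pure_blue red T' hbl, hbl⟩)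
    push_neg at hr hbl
    refine Or.inl ?_
    rw [hM, mem_image]
    obtain ⟨y, hy, hyr⟩ := hr
    obtain ⟨x, hx, hxr⟩ := hbl
    exact ⟨T', mem_filter.2 ⟨mem_powerset.2 hT', ⟨x, hx, hxr⟩, ⟨y, hy, hyr⟩⟩, rfl⟩
  by_cases hc1 : ∃ i ∈ S, red i ∧ pref i 1 θs
  · -- a red agent preferring to be alone
    obtain ⟨i, hiS, hired, hipref⟩ := hc1
    refine ⟨{i}, singleton_subset_iff.2 hiS, singleton_nonempty i, ?_⟩
    intro j hj T' hT' hjT'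
    rw [mem_singleton] at hj; subst hj
    rw [ratio_pure_red red {j} (singleton_nonempty j) (by simpa using hired)]
    rcases hclass T' hT' ⟨j, hjT'⟩ with hm | ⟨he, _⟩ | ⟨he, hall⟩
    · by_cases heq : redRatio red T' = θs
      · exact Or.inr (heq ▸ hipref)
      · exact Or.inr (htrans j hipref (hbest j _ hm heq))
    · exact Or.inl he.symm
    · exact absurd hired (hall j hjT')
  by_cases hc0 : ∃ i ∈ S, ¬ red i ∧ pref i 0 θs
  · -- a blue agent preferring to be alone
    obtain ⟨i, hiS, hired, hipref⟩ := hc0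
    refine ⟨{i}, singleton_subset_iff.2 hiS, singleton_nonempty i, ?_⟩
    intro j hj T' hT' hjT'
    rw [mem_singleton] at hj; subst hj
    rw [ratio_pure_blue red {j} (by simpa using hired)]
    rcases hclass T' hT' ⟨j, hjT'⟩ with hm | ⟨he, hall⟩ | ⟨he, _⟩
    · by_cases heq : redRatio red T' = θs
      · exact Or.inr (heq ▸ hipref)
      · exact Or.inr (htrans j hipref (hbest j _ hm heq))
    · exact absurd (hall j hjT') hired
    · exact Or.inl he.symm
  push_neg at hc1 hc0
  -- take a coalition with the best mixed ratio
  obtain ⟨T₀, hT₀, hratio⟩ : ∃ T₀, (T₀ ∈ S.powerset.filter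
      (fun T => (∃ x ∈ T, red x) ∧ (∃ x ∈ T, ¬ red x))) ∧ redRatio red T₀ = θs := by
    rw [hM, mem_image] at hθsM; obtain ⟨T₀, h, h'⟩ := hθsM; exact ⟨T₀, h, h'⟩
  rw [mem_filter, mem_powerset] at hT₀
  obtain ⟨hT₀S, ⟨x₀, hx₀, hx₀r⟩, _⟩ := hT₀
  refine ⟨T₀, hT₀S, ⟨x₀, hx₀⟩, ?_⟩
  intro i hi T' hT' hiT'
  rw [hratio]
  rcases hclass T' hT' ⟨i, hiT'⟩ with hm | ⟨he, hall⟩ | ⟨he, hall⟩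
  · by_cases heq : redRatio red T' = θs
    · exact Or.inl (heq ▸ rfl)
    · exact Or.inr (hbest i _ hm heq)
  · -- T' pure red, so i is red; i doesn't prefer 1 to θs
    have hired : red i := hall i hiT'
    have : ¬ pref i 1 θs := hc1 i (hT₀S hi) hired
    rw [he]
    rcases htotal i θs hθsΘ 1 h1 hθs1 with h | h
    · exact Or.inr h
    · exact absurd h this
  · have hired : ¬ red i := hall i hiT'
    have : ¬ pref i 0 θs := hc0 i (hT₀S hi) hired
    rw [he]
    rcases htotal i θs hθsΘ 0 h0 hθs0 with h | h
    · exact Or.inr h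
    · exact absurd h this
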